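/- Let S be a finite family of sets such that no three members have triangle intersection. Then for any three distinct members F_1, F_2, F_3 of S, |F_1 ∩ F_2 ∩ F_3| = min(|F_1 ∩ F_2|, |F_1 ∩ F_3|, |F_2 ∩ F_3|). -/
import Mathlib

/-- if `S` is a finite family of finite sets no three members of which have
triangle intersection, then for any three distinct members `F₁ F₂ F₃` of `S`,
`|F₁ ∩ F₂ ∩ F₃| = min (|F₁ ∩ F₂|, |F₁ ∩ F₃|, |F₂ ∩ F₃|)`. -/
theorem stmt12 {α : Type*} [DecidableEq α] (S : Finset (Finset α))
    (htri : ∀ A ∈ S, ∀ B ∈ S, ∀ C ∈ S,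
      ¬ (((B ∩ C) \ A).Nonempty ∧ ((A ∩ C) \ B).Nonempty ∧ ((A ∩ B) \ C).Nonempty))
    (F₁ F₂ F₃ : Finset α) (h1 : F₁ ∈ S) (h2 : F₂ ∈ S) (h3 : F₃ ∈ S)
    (h12 : F₁ ≠ F₂) (h13 : F₁ ≠ F₃) (h23 : F₂ ≠ F₃) :
    (F₁ ∩ F₂ ∩ F₃).card =
      min (min (F₁ ∩ F₂).card (F₁ ∩ F₃).card) (F₂ ∩ F₃).card := by
  have h := htri F₁ h1 F₂ h2 F₃ h3
  rw [not_and_or, not_and_or] at h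
  simp only [Finset.not_nonempty_iff_eq_empty, Finset.sdiff_eq_empty_iff_subset] at h
  rcases h with h | h | h
  · -- F₂ ∩ F₃ ⊆ F₁
    have e : F₁ ∩ F₂ ∩ F₃ = F₂ ∩ F₃ := by
      apply Finset.Subset.antisymm
      · intro x hx; simp at hx ⊢; obtain ⟨a, b, c⟩ := hx; exact ⟨b, c⟩
      · intro x hx; simp at hx ⊢; exact ⟨h (by simp [hx.1, hx.2]), hx.1, hx.2⟩
    rw [e]
    have l1 : (F₂ ∩ F₃).card ≤ (F₁ ∩ F₂).card := by
      apply Finset.card_le_card; intro x hx; simp at hx ⊢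
      exact ⟨h (by simp [hx.1, hx.2]), hx.1⟩
    have l2 : (F₂ ∩ F₃).card ≤ (F₁ ∩ F₃).card := by
      apply Finset.card_le_card; intro x hx; simp at hx ⊢
      exact ⟨h (by simp [hx.1, hx.2]), hx.2⟩
    omega
  · -- F₁ ∩ F₃ ⊆ F₂
    have e : F₁ ∩ F₂ ∩ F₃ = F₁ ∩ F₃ := by
      apply Finset.Subset.antisymm
      · intro x hx; simp at hx ⊢; obtain ⟨a, b, c⟩ := hx; exact ⟨a, c⟩
      · intro x hx; simp at hx ⊢; exact ⟨hx.1, h (by simp [hx.1, hx.2]), hx.2⟩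
    rw [e]
    have l1 : (F₁ ∩ F₃).card ≤ (F₁ ∩ F₂).card := by
      apply Finset.card_le_card; intro x hx; simp at hx ⊢
      exact ⟨hx.1, h (by simp [hx.1, hx.2])⟩
    have l2 : (F₁ ∩ F₃).card ≤ (F₂ ∩ F₃).card := by
      apply Finset.card_le_card; intro x hx; simp at hx ⊢
      exact ⟨h (by simp [hx.1, hx.2]), hx.2⟩
    omega
  · -- F₁ ∩ F₂ ⊆ F₃
    have e : F₁ ∩ F₂ ∩ F₃ = F₁ ∩ F₂ := by
      apply Finset.Subset.antisymm
      · intro x hx; simp at hx ⊢; obtain ⟨a, b, c⟩ := hx; exact ⟨a, b⟩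
      · intro x hx; exact Finset.mem_inter.mpr ⟨hx, h hx⟩
    rw [e]
    have l1 : (F₁ ∩ F₂).card ≤ (F₁ ∩ F₃).card := by
      apply Finset.card_le_card; intro x hx; simp at hx ⊢
      exact ⟨hx.1, h (by simp [hx.1, hx.2])⟩
    have l2 : (F₁ ∩ F₂).card ≤ (F₂ ∩ F₃).card := by
      apply Finset.card_le_card; intro x hx; simp at hx ⊢
      exact ⟨hx.2, h (by simp [hx.1, hx.2])⟩
    omega
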